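/- Let y ∈ ℝⁿ, let X ∈ ℝ^{n×p} be a matrix of continuous covariates with columns x_1,…,x_p, and let r : {1,…,n} → {1,…,L} be a categorical covariate with all group counts n_ℓ positive; write π̂_ℓ = n_ℓ/n, x̄_ℓ(j) = n_ℓ^{-1} ∑_{i : r(i)=ℓ} x_{ij}, and the within-group sample covariances Ĉov_ℓ(x_j, x_h) = n_ℓ^{-1} ∑_{i : r(i)=ℓ} x_{ij} x_{ih} − x̄_ℓ(j) x̄_ℓ(h). Assume the equal-covariance condition: Ĉov_ℓ(x_j, x_h) = Ĉov_1(x_j, x_h) for all ℓ = 1,…,L and all j, h = 1,…,p. Consider (a) the main-only model: minimize ∑_i (y_i − α₀ − ∑_j x_{ij} α_j − β_{r(i)})² subject to ∑_ℓ π̂_ℓ β_ℓ = 0; and (b) the fully cat-modified model: minimize ∑_i (y_i − α₀ − ∑_j x_{ij} α_j − β_{r(i)} − ∑_j x_{ij} γ_{j, r(i)})² subject to ∑_ℓ π̂_ℓ β_ℓ = 0 and ∑_ℓ π̂_ℓ γ_{j,ℓ} = 0 for every j = 1,…,p. Assume both constrained least-squares problems have unique minimizers. Then all p estimated main continuous-covariate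 effects coincide: α̂_j^M = α̂_j for every j = 1,…,p. -/

import Mathlib

open Finset

/-- The (scaled) within-group sample covariance of `u` and `v` in group `ℓ` of the
categorical covariate `r`:
`Ĉov_ℓ(u, v) = n_ℓ⁻¹ ∑_{i : r i = ℓ} u i * v i − ū_ℓ * v̄_ℓ`. -/
noncomputable def groupCov {n L : ℕ} (u v : Fin n → ℝ) (r : Fin n → Fin L) (ℓ : Fin L) : ℝ :=
  (∑ i ∈ Finset.univ.filter (fun i : Fin n => r i = ℓ), u i * v i) /
      ((Finset.univ.filter (fun i : Fin n => r i = ℓ)).card : ℝ) -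
    ((∑ i ∈ Finset.univ.filter (fun i : Fin n => r i = ℓ), u i) /
      ((Finset.univ.filter (fun i : Fin n => r i = ℓ)).card : ℝ)) *
    ((∑ i ∈ Finset.univ.filter (fun i : Fin n => r i = ℓ), v i) /
      ((Finset.univ.filter (fun i : Fin n => r i = ℓ)).card : ℝ))

/-- Theorem 4: invariance of all main continuous effects when every
continuous covariate is cat-modified.  Under abundance-based constraints and the
equal-covariance condition, all `p` estimated main continuous-covariate effects of the
main-only model coincide with those of the fully cat-modified model.  Both constrained
least-squares problems are assumed to have unique minimizers. -/
lemma key_scalar (q c : ℝ) (hq : 0 ≤ q) (h : ∀ t : ℝ, 0 ≤ q*t^2 - 2*c*t) : c = 0 := by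
  set t := c / (q+1) with ht
  have hq1 : (0:ℝ) < q + 1 := by linarith
  have hc : c = t * (q+1) := by rw [ht]; exact (div_mul_cancel₀ c hq1.ne').symm
  have h1 := h t
  rw [hc] at h1 ⊢
  have ht0 : t = 0 := by nlinarith [sq_nonneg t]
  rw [ht0]; ring

lemma sq_expand {n : ℕ} (f g : Fin n → ℝ) (t : ℝ) :
    ∑ i, (f i - t * g i)^2 =
      ∑ i, f i ^2 - 2*t*(∑ i, f i * g i) + t^2 * ∑ i, g i ^2 := by
  have h : ∀ i : Fin n, (f i - t*g i)^2 = f i^2 - 2*t*(f i * g i) + t^2*(g i^2) :=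
    fun i => by ring
  simp_rw [h, Finset.sum_add_distrib, Finset.sum_sub_distrib, ← Finset.mul_sum]

theorem abc_full_interaction_slope_invariance
    {n p L : ℕ} (hL : 0 < L)
    (y : Fin n → ℝ) (x : Fin n → Fin p → ℝ) (r : Fin n → Fin L)
    (hcount : ∀ ℓ : Fin L, 0 < (univ.filter (fun i : Fin n => r i = ℓ)).card)
    -- equal-covariance condition
    (heqcov : ∀ (ℓ : Fin L) (j h : Fin p),
      groupCov (fun i => x i j) (fun i => x i h) r ℓ =
        groupCov (fun i => x i j) (fun i => x i h) r ⟨0, hL⟩)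
    -- main-only estimates
    (α₀M : ℝ) (αM : Fin p → ℝ) (βM : Fin L → ℝ)
    -- cat-modified estimates
    (α₀ : ℝ) (α : Fin p → ℝ) (β : Fin L → ℝ) (γ : Fin p → Fin L → ℝ)
    -- ABC for the main-only estimator
    (hM : ∑ ℓ : Fin L,
      (((univ.filter (fun i : Fin n => r i = ℓ)).card : ℝ) / n) * βM ℓ = 0)
    -- the main-only estimator is a constrained least-squares minimizer
    (hMmin : ∀ (a0 : ℝ) (a : Fin p → ℝ) (b : Fin L → ℝ),
      (∑ ℓ : Fin L,
        (((univ.filter (fun i : Fin n => r i = ℓ)).card : ℝ) / n) * b ℓ = 0) →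
      ∑ i : Fin n, (y i - (α₀M + (∑ j : Fin p, x i j * αM j) + βM (r i))) ^ 2 ≤
        ∑ i : Fin n, (y i - (a0 + (∑ j : Fin p, x i j * a j) + b (r i))) ^ 2)
    -- ... and it is the unique such minimizer
    (hMuniq : ∀ (a0 : ℝ) (a : Fin p → ℝ) (b : Fin L → ℝ),
      (∑ ℓ : Fin L,
        (((univ.filter (fun i : Fin n => r i = ℓ)).card : ℝ) / n) * b ℓ = 0) →
      (∑ i : Fin n, (y i - (a0 + (∑ j : Fin p, x i j * a j) + b (r i))) ^ 2 ≤
        ∑ i : Fin n, (y i - (α₀M + (∑ j : Fin p, x i j * αM j) + βM (r i))) ^ 2) →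
      a0 = α₀M ∧ a = αM ∧ b = βM)
    -- ABCs for the cat-modified estimator
    (hC1 : ∑ ℓ : Fin L,
      (((univ.filter (fun i : Fin n => r i = ℓ)).card : ℝ) / n) * β ℓ = 0)
    (hC2 : ∀ j : Fin p, ∑ ℓ : Fin L,
      (((univ.filter (fun i : Fin n => r i = ℓ)).card : ℝ) / n) * γ j ℓ = 0)
    -- the cat-modified estimator is a constrained least-squares minimizer
    (hCmin : ∀ (a0 : ℝ) (a : Fin p → ℝ) (b : Fin L → ℝ) (g : Fin p → Fin L → ℝ),
      (∑ ℓ : Fin L,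
        (((univ.filter (fun i : Fin n => r i = ℓ)).card : ℝ) / n) * b ℓ = 0) →
      (∀ j : Fin p, ∑ ℓ : Fin L,
        (((univ.filter (fun i : Fin n => r i = ℓ)).card : ℝ) / n) * g j ℓ = 0) →
      ∑ i : Fin n, (y i - (α₀ + (∑ j : Fin p, x i j * α j) + β (r i) +
          ∑ j : Fin p, x i j * γ j (r i))) ^ 2 ≤
        ∑ i : Fin n, (y i - (a0 + (∑ j : Fin p, x i j * a j) + b (r i) +
          ∑ j : Fin p, x i j * g j (r i))) ^ 2)
    -- ... and it is the unique such minimizer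
    (hCuniq : ∀ (a0 : ℝ) (a : Fin p → ℝ) (b : Fin L → ℝ) (g : Fin p → Fin L → ℝ),
      (∑ ℓ : Fin L,
        (((univ.filter (fun i : Fin n => r i = ℓ)).card : ℝ) / n) * b ℓ = 0) →
      (∀ j : Fin p, ∑ ℓ : Fin L,
        (((univ.filter (fun i : Fin n => r i = ℓ)).card : ℝ) / n) * g j ℓ = 0) →
      (∑ i : Fin n, (y i - (a0 + (∑ j : Fin p, x i j * a j) + b (r i) +
          ∑ j : Fin p, x i j * g j (r i))) ^ 2 ≤
        ∑ i : Fin n, (y i - (α₀ + (∑ j : Fin p, x i j * α j) + β (r i) +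
          ∑ j : Fin p, x i j * γ j (r i))) ^ 2) →
      a0 = α₀ ∧ a = α ∧ b = β ∧ g = γ) :
    ∀ j : Fin p, αM j = α j := by
  classical
  set F : Fin L → Finset (Fin n) := fun ℓ => univ.filter (fun i : Fin n => r i = ℓ) with hFdef
  have hF : ∀ ℓ, univ.filter (fun i : Fin n => r i = ℓ) = F ℓ := fun ℓ => rfl
  simp only [hF] at hcount hM hMmin hMuniq hC1 hC2 hCmin hCuniq
  have hn0 : 0 < n := by
    have h1 := hcount ⟨0, hL⟩
    have h2 : (F ⟨0, hL⟩).card ≤ n := by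
      simpa using Finset.card_filter_le univ (fun i : Fin n => r i = ⟨0, hL⟩)
    omega
  have hnR : (n:ℝ) ≠ 0 := Nat.cast_ne_zero.2 hn0.ne'
  have hm : ∀ ℓ, ((F ℓ).card : ℝ) ≠ 0 := fun ℓ => Nat.cast_ne_zero.2 (hcount ℓ).ne'
  have hcard : ∑ ℓ, ((F ℓ).card : ℝ) = n := by
    rw [← Nat.cast_sum]
    congr 1
    have := Finset.card_eq_sum_card_fiberwise (f := r) (s := (univ : Finset (Fin n)))
      (t := univ) (fun i _ => Finset.mem_univ _)
    simpa using this.symm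
  set π : Fin L → ℝ := fun ℓ => ((F ℓ).card : ℝ) / n with hπdef
  have hπ1 : ∑ ℓ, π ℓ = 1 := by
    simp only [hπdef]; rw [← Finset.sum_div, hcard, div_self hnR]
  have feas : ∀ c : Fin L → ℝ, ∑ ℓ, π ℓ * (c ℓ - ∑ ℓ', π ℓ' * c ℓ') = 0 := by
    intro c
    simp only [mul_sub]
    rw [Finset.sum_sub_distrib, ← Finset.sum_mul, hπ1, one_mul, sub_self]
  have hsplit : ∀ f : Fin n → ℝ, ∑ i, f i = ∑ ℓ, ∑ i ∈ F ℓ, f i :=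
    fun f => (Finset.sum_fiberwise univ r f).symm
  set e : Fin n → ℝ := fun i =>
    y i - (α₀ + (∑ j : Fin p, x i j * α j) + β (r i) + ∑ j : Fin p, x i j * γ j (r i))
    with he
  -- master stationarity for the cat-modified minimizer
  have stat : ∀ (d : Fin L → ℝ) (w : Fin p → Fin L → ℝ),
      ∑ i, e i * (d (r i) + ∑ j, x i j * w j (r i)) = 0 := by
    intro d w
    set v : Fin n → ℝ := fun i => d (r i) + ∑ j, x i j * w j (r i) with hv
    refine key_scalar (∑ i, (v i)^2) _ (Finset.sum_nonneg fun i _ => sq_nonneg _) ?_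
    intro t
    set c : Fin L → ℝ := fun ℓ => α₀ + β ℓ + t * d ℓ with hcdef
    set s : Fin p → Fin L → ℝ := fun j ℓ => α j + γ j ℓ + t * w j ℓ with hsdef
    have h := hCmin (∑ ℓ, π ℓ * c ℓ) (fun j => ∑ ℓ, π ℓ * s j ℓ)
        (fun ℓ => c ℓ - ∑ ℓ', π ℓ' * c ℓ') (fun j ℓ => s j ℓ - ∑ ℓ', π ℓ' * s j ℓ')
        (feas c) (fun j => feas (s j))
    have hLHS : ∑ i : Fin n, (y i - (α₀ + (∑ j : Fin p, x i j * α j) + β (r i) +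
        ∑ j : Fin p, x i j * γ j (r i))) ^ 2 = ∑ i, (e i)^2 := by
      simp only [he]
    have hRHS : ∑ i : Fin n, (y i - ((∑ ℓ, π ℓ * c ℓ) +
        (∑ j : Fin p, x i j * (∑ ℓ, π ℓ * s j ℓ)) +
        (c (r i) - ∑ ℓ', π ℓ' * c ℓ') +
        ∑ j : Fin p, x i j * (s j (r i) - ∑ ℓ', π ℓ' * s j ℓ'))) ^ 2
        = ∑ i, (e i - t * v i)^2 := by
      refine Finset.sum_congr rfl fun i _ => ?_
      have h1 : ∑ j : Fin p, x i j * (s j (r i) - ∑ ℓ', π ℓ' * s j ℓ') =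
          ∑ j : Fin p, x i j * s j (r i) - ∑ j : Fin p, x i j * (∑ ℓ', π ℓ' * s j ℓ') := by
        rw [← Finset.sum_sub_distrib]
        exact Finset.sum_congr rfl fun j _ => by ring
      have h2 : ∑ j : Fin p, x i j * s j (r i) =
          (∑ j : Fin p, x i j * α j) + (∑ j : Fin p, x i j * γ j (r i)) +
            t * ∑ j : Fin p, x i j * w j (r i) := by
        rw [Finset.mul_sum, ← Finset.sum_add_distrib, ← Finset.sum_add_distrib]
        exact Finset.sum_congr rfl fun j _ => by simp only [hsdef]; ring
      simp only [he, hv, hcdef]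
      rw [h1, h2]
      ring
    rw [hLHS, hRHS, sq_expand] at h
    linarith
  -- group-wise normal equations
  have A : ∀ ℓ, ∑ i ∈ F ℓ, e i = 0 := by
    intro ℓ
    have h := stat (fun ℓ' => if ℓ' = ℓ then 1 else 0) (fun _ _ => 0)
    simp only [mul_zero, Finset.sum_const_zero, add_zero, mul_ite, mul_one] at h
    rw [hFdef]
    rw [Finset.sum_filter]
    exact h
  have B : ∀ (j : Fin p) (ℓ), ∑ i ∈ F ℓ, e i * x i j = 0 := by
    intro j ℓ
    have h := stat (fun _ => 0) (fun j' ℓ' => if j' = j then (if ℓ' = ℓ then 1 else 0) else 0)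
    have hinner : ∀ i : Fin n, ∑ j' : Fin p,
        x i j' * (if j' = j then (if r i = ℓ then 1 else 0) else 0) =
        if r i = ℓ then x i j else 0 := by
      intro i
      rw [Finset.sum_eq_single j]
      · by_cases hi : r i = ℓ <;> simp [hi]
      · intro b _ hb; simp [hb]
      · simp
    simp only [zero_add] at h
    simp only [hinner] at h
    simp only [mul_ite, mul_zero] at h
    rw [hFdef]
    rw [Finset.sum_filter]
    exact h
  have hmem : ∀ ℓ : Fin L, ∀ i ∈ F ℓ, r i = ℓ := by
    intro ℓ i hi
    simp only [hFdef, Finset.mem_filter] at hi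
    exact hi.2
  set xbar : Fin L → Fin p → ℝ := fun ℓ j => (∑ i ∈ F ℓ, x i j) / ((F ℓ).card : ℝ) with hxbardef
  set c' : Fin L → ℝ := fun ℓ => α₀ + β ℓ + ∑ j, xbar ℓ j * γ j ℓ with hc'def
  set e' : Fin n → ℝ := fun i => y i - (c' (r i) + ∑ j, x i j * α j) with he'def
  have he' : ∀ ℓ : Fin L, ∀ i ∈ F ℓ, e' i =
      e i + (∑ j, x i j * γ j ℓ - ∑ j, xbar ℓ j * γ j ℓ) := by
    intro ℓ i hi
    have hri : r i = ℓ := hmem ℓ i hi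
    simp only [he'def, he, hc'def, hri]
    ring
  have A' : ∀ ℓ, ∑ i ∈ F ℓ, e' i = 0 := by
    intro ℓ
    rw [Finset.sum_congr rfl (he' ℓ), Finset.sum_add_distrib, A ℓ, zero_add,
      Finset.sum_sub_distrib]
    rw [Finset.sum_comm, Finset.sum_comm (s := F ℓ)]
    refine sub_eq_zero.2 (Finset.sum_congr rfl fun j _ => ?_)
    rw [← Finset.sum_mul, Finset.sum_const, nsmul_eq_mul, hxbardef]
    have k2 : ∀ (a g m : ℝ), m ≠ 0 → a * g = m * (a / m * g) := by
      intro a g m hm0; field_simp <;> ring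
    exact k2 _ _ _ (hm ℓ)
  have hmcov : ∀ (ℓ : Fin L) (j h : Fin p),
      (∑ i ∈ F ℓ, x i j * x i h) - xbar ℓ j * ∑ i ∈ F ℓ, x i h
        = ((F ℓ).card : ℝ) * groupCov (fun i => x i j) (fun i => x i h) r ℓ := by
    intro ℓ j h
    simp only [groupCov, hxbardef, hF]
    have k1 : ∀ (A a b m : ℝ), m ≠ 0 → A - a / m * b = m * (A / m - a / m * (b / m)) := by
      intro A a b m hm0; field_simp <;> ring
    exact k1 _ _ _ _ (hm ℓ)
  have B' : ∀ h : Fin p, ∑ i, e' i * x i h = 0 := by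
    intro h
    have hγ0 : ∀ j, ∑ ℓ, ((F ℓ).card : ℝ) * γ j ℓ = 0 := by
      intro j
      have h2 := hC2 j
      have h3 : ∑ ℓ, ((F ℓ).card : ℝ)/n * γ j ℓ = (∑ ℓ, ((F ℓ).card : ℝ) * γ j ℓ)/n := by
        rw [Finset.sum_div]; exact Finset.sum_congr rfl fun ℓ _ => by ring
      rw [h3] at h2
      exact (div_eq_zero_iff.1 h2).resolve_right hnR
    have per : ∀ ℓ, ∑ i ∈ F ℓ, e' i * x i h =
        ∑ j, γ j ℓ * (((F ℓ).card : ℝ) * groupCov (fun i => x i j) (fun i => x i h) r ℓ) := by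
      intro ℓ
      have h1 : ∀ i ∈ F ℓ, e' i * x i h =
          e i * x i h + ((∑ j, (x i j * γ j ℓ) * x i h) - ∑ j, (xbar ℓ j * γ j ℓ) * x i h) := by
        intro i hi
        rw [he' ℓ i hi, add_mul]
        congr 1
        rw [sub_mul, Finset.sum_mul, Finset.sum_mul]
      rw [Finset.sum_congr rfl h1, Finset.sum_add_distrib, B h ℓ, zero_add,
        Finset.sum_sub_distrib]
      rw [Finset.sum_comm, Finset.sum_comm (s := F ℓ), ← Finset.sum_sub_distrib]
      refine Finset.sum_congr rfl fun j _ => ?_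
      rw [← hmcov ℓ j h, mul_sub]
      congr 1
      · rw [Finset.mul_sum]; exact Finset.sum_congr rfl fun i _ => by ring
      · rw [← Finset.mul_sum]
        ring
    rw [hsplit, Finset.sum_congr rfl (fun ℓ _ => per ℓ), Finset.sum_comm]
    refine Finset.sum_eq_zero fun j _ => ?_
    have hcongr : ∀ ℓ ∈ (univ : Finset (Fin L)),
        γ j ℓ * (((F ℓ).card : ℝ) * groupCov (fun i => x i j) (fun i => x i h) r ℓ) =
        (((F ℓ).card : ℝ) * γ j ℓ) *
          groupCov (fun i => x i j) (fun i => x i h) r ⟨0, hL⟩ := by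
      intro ℓ _
      rw [heqcov ℓ j h]; ring
    rw [Finset.sum_congr rfl hcongr, ← Finset.sum_mul, hγ0 j, zero_mul]
  -- the candidate is a minimizer of the main-only problem
  have hle : ∑ i : Fin n, (y i - ((∑ ℓ, π ℓ * c' ℓ) + (∑ j : Fin p, x i j * α j) +
      (c' (r i) - ∑ ℓ', π ℓ' * c' ℓ'))) ^ 2 ≤
      ∑ i : Fin n, (y i - (α₀M + (∑ j : Fin p, x i j * αM j) + βM (r i))) ^ 2 := by
    have hLHS : ∑ i : Fin n, (y i - ((∑ ℓ, π ℓ * c' ℓ) + (∑ j : Fin p, x i j * α j) +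
        (c' (r i) - ∑ ℓ', π ℓ' * c' ℓ'))) ^ 2 = ∑ i, (e' i)^2 :=
      Finset.sum_congr rfl fun i _ => by simp only [he'def]; ring
    set v : Fin n → ℝ := fun i => (α₀M + βM (r i) - c' (r i)) + ∑ j, x i j * (αM j - α j)
      with hvdef
    have hRHS : ∑ i : Fin n, (y i - (α₀M + (∑ j : Fin p, x i j * αM j) + βM (r i)))^2 =
        ∑ i, (e' i - 1 * v i)^2 := by
      refine Finset.sum_congr rfl fun i _ => ?_
      have h1 : ∑ j, x i j * (αM j - α j) =
          (∑ j, x i j * αM j) - ∑ j, x i j * α j := by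
        rw [← Finset.sum_sub_distrib]; exact Finset.sum_congr rfl fun j _ => by ring
      simp only [he'def, hvdef]
      rw [h1]; ring
    have hev : ∑ i, e' i * v i = 0 := by
      have h1 : ∀ i ∈ (univ : Finset (Fin n)), e' i * v i =
          e' i * (α₀M + βM (r i) - c' (r i)) + ∑ j, (e' i * x i j) * (αM j - α j) := by
        intro i _
        simp only [hvdef]
        rw [mul_add, Finset.mul_sum]
        congr 1
        exact Finset.sum_congr rfl fun j _ => by ring
      rw [Finset.sum_congr rfl h1, Finset.sum_add_distrib]
      have h2 : ∑ i, e' i * (α₀M + βM (r i) - c' (r i)) = 0 := by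
        rw [hsplit]
        refine Finset.sum_eq_zero fun ℓ _ => ?_
        have hcongr : ∀ i ∈ F ℓ, e' i * (α₀M + βM (r i) - c' (r i)) =
            e' i * (α₀M + βM ℓ - c' ℓ) := by
          intro i hi; rw [hmem ℓ i hi]
        rw [Finset.sum_congr rfl hcongr, ← Finset.sum_mul, A' ℓ, zero_mul]
      have h3 : ∑ i : Fin n, ∑ j, (e' i * x i j) * (αM j - α j) = 0 := by
        rw [Finset.sum_comm]
        refine Finset.sum_eq_zero fun j _ => ?_
        rw [← Finset.sum_mul, B' j, zero_mul]
      rw [h2, h3, add_zero]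
    rw [hLHS, hRHS, sq_expand, hev]
    have hvnn : 0 ≤ ∑ i, (v i)^2 := Finset.sum_nonneg fun i _ => sq_nonneg _
    nlinarith
  have key := hMuniq (∑ ℓ, π ℓ * c' ℓ) α (fun ℓ => c' ℓ - ∑ ℓ', π ℓ' * c' ℓ')
    (feas c') hle
  intro j
  rw [key.2.1]
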